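/- Let L ≥ 1 and let h, g ∈ ℂ^L with h ≠ 0 and with g not a scalar multiple of h. Perform Gram–Schmidt orthogonalization: q₁ = ‖h‖⁻¹ • h, r₁₂ = ⟪q₁, g⟫, v = g − r₁₂ • q₁, r₂₂ = ‖v‖ (which is positive), q₂ = r₂₂⁻¹ • v, and let φ = arg⟪h, g⟫. Define w ∈ ℂ^L by w_l = (1/√2)·(exp(−iφ)·conj(q₁ l) + i·conj(q₂ l)). Then Σ_l g_l·w_l = (1/√2)·(|r₁₂| + i·r₂₂); in particular |Σ_l g_l·w_l|² = (|r₁₂|² + r₂₂²)/2 = ‖g‖²/2. (Identity (30)–(31) in the proof of Proposition 2.) -/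

import Mathlib

/-- Identity (30)–(31) in the proof of Proposition 2:
`g^T w = (1/√2)·(|r₁₂| + i·r₂₂)`, hence `|g^T w|² = (|r₁₂|² + r₂₂²)/2 = ‖g‖²/2`. -/
theorem pr_beamforming_g_component
    (L : ℕ) (hL : 1 ≤ L) (h g : EuclideanSpace ℂ (Fin L))
    (hh : h ≠ 0) (hg : ∀ c : ℂ, g ≠ c • h)
    (q₁ q₂ v w : EuclideanSpace ℂ (Fin L)) (r₁₂ : ℂ) (r₂₂ φ : ℝ)
    (hq₁ : q₁ = (‖h‖ : ℂ)⁻¹ • h)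
    (hr₁₂ : r₁₂ = (inner ℂ q₁ g : ℂ))
    (hv : v = g - r₁₂ • q₁)
    (hr₂₂ : r₂₂ = ‖v‖)
    (hr₂₂pos : 0 < r₂₂)
    (hq₂ : q₂ = (r₂₂ : ℂ)⁻¹ • v)
    (hφ : φ = Complex.arg (inner ℂ h g : ℂ))
    (hw : ∀ l, w l = (Real.sqrt 2 : ℂ)⁻¹ *
      (Complex.exp (-(Complex.I * φ)) * (starRingEnd ℂ) (q₁ l) +
        Complex.I * (starRingEnd ℂ) (q₂ l))) :
    (∑ l, g l * w l) = (Real.sqrt 2 : ℂ)⁻¹ * ((‖r₁₂‖ : ℂ) + Complex.I * (r₂₂ : ℂ)) ∧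
      ‖∑ l, g l * w l‖ ^ 2 = (‖r₁₂‖ ^ 2 + r₂₂ ^ 2) / 2 ∧
      ‖∑ l, g l * w l‖ ^ 2 = ‖g‖ ^ 2 / 2 := by
  have hnh : (0:ℝ) < ‖h‖ := norm_pos_iff.mpr hh
  have hq1n : ‖q₁‖ = 1 := by
    rw [hq₁, norm_smul]
    simp [norm_inv, hnh.ne']
  have hq1self : (inner ℂ q₁ q₁ : ℂ) = 1 := by
    rw [inner_self_eq_norm_sq_to_K, hq1n]; norm_num
  have horth : (inner ℂ q₁ v : ℂ) = 0 := by
    rw [hv, inner_sub_right, inner_smul_right, hq1self, ← hr₁₂]; ring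
  have horth' : (inner ℂ v q₁ : ℂ) = 0 := by
    rw [← inner_conj_symm, horth]; simp
  have hvv : (inner ℂ v v : ℂ) = (r₂₂:ℂ)^2 := by
    rw [inner_self_eq_norm_sq_to_K, hr₂₂]; norm_num
  have hgdecomp : g = v + r₁₂ • q₁ := by rw [hv]; abel
  have hr22ne : (r₂₂:ℂ) ≠ 0 := by exact_mod_cast hr₂₂pos.ne'
  have hq2g : (inner ℂ q₂ g : ℂ) = (r₂₂ : ℂ) := by
    rw [hq₂, inner_smul_left, map_inv₀, Complex.conj_ofReal, hgdecomp,
      inner_add_right, inner_smul_right, hvv, horth']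
    field_simp; ring
  have hr12' : r₁₂ = ((‖h‖⁻¹ : ℝ) : ℂ) * (inner ℂ h g : ℂ) := by
    rw [hr₁₂, hq₁, inner_smul_left, map_inv₀, Complex.conj_ofReal]
    push_cast; ring
  have harg : Complex.arg r₁₂ = φ := by
    rw [hr12', hφ, Complex.arg_real_mul _ (inv_pos.mpr hnh)]
  have hexp : Complex.exp (-(Complex.I * φ)) * r₁₂ = (‖r₁₂‖ : ℂ) := by
    conv_lhs => rw [← Complex.norm_mul_exp_arg_mul_I r₁₂, harg]
    rw [mul_comm (‖r₁₂‖ : ℂ), ← mul_assoc, ← Complex.exp_add]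
    ring_nf
    simp
  have hsum1 : (∑ l, g l * (starRingEnd ℂ) (q₁ l)) = r₁₂ := by
    rw [hr₁₂, PiLp.inner_apply]
    simp [RCLike.inner_apply, mul_comm]
  have hsum2 : (∑ l, g l * (starRingEnd ℂ) (q₂ l)) = (r₂₂:ℂ) := by
    rw [← hq2g, PiLp.inner_apply]
    simp [RCLike.inner_apply, mul_comm]
  have key : (∑ l, g l * w l) = (Real.sqrt 2 : ℂ)⁻¹ * ((‖r₁₂‖ : ℂ) + Complex.I * (r₂₂ : ℂ)) := by
    have step : (∑ l, g l * w l) =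
        ∑ l, ((Real.sqrt 2 : ℂ)⁻¹ * (Complex.exp (-(Complex.I * φ)) * (g l * (starRingEnd ℂ) (q₁ l)))
          + (Real.sqrt 2 : ℂ)⁻¹ * (Complex.I * (g l * (starRingEnd ℂ) (q₂ l)))) :=
      Finset.sum_congr rfl fun l _ => by rw [hw l]; ring
    rw [step, Finset.sum_add_distrib]
    simp only [← Finset.mul_sum]
    rw [hsum1, hsum2, hexp]; ring
  -- ‖g‖² = |r₁₂|² + r₂₂²
  have hng : ‖g‖ ^ 2 = ‖r₁₂‖ ^ 2 + r₂₂ ^ 2 := by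
    have hC : ((‖g‖ ^ 2 : ℝ) : ℂ) = ((‖r₁₂‖ ^ 2 + r₂₂ ^ 2 : ℝ) : ℂ) := by
      have : ((‖g‖:ℂ)) ^ 2 = (inner ℂ g g : ℂ) := (inner_self_eq_norm_sq_to_K g).symm
      push_cast
      rw [this]
      rw [hgdecomp]
      rw [inner_add_left, inner_add_right, inner_add_right, inner_smul_left,
        inner_smul_left, inner_smul_right, inner_smul_right, hvv, horth, horth', hq1self]
      rw [mul_zero, mul_zero, mul_one, ← Complex.normSq_eq_conj_mul_self,
        Complex.normSq_eq_norm_sq]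
      push_cast
      ring
    exact_mod_cast hC
  have habs : ‖∑ l, g l * w l‖ ^ 2 = (‖r₁₂‖ ^ 2 + r₂₂ ^ 2) / 2 := by
    rw [key, norm_mul, norm_inv, mul_pow, Complex.sq_norm]
    simp only [Complex.normSq_apply, Complex.add_re, Complex.ofReal_re, Complex.mul_re,
      Complex.I_re, Complex.I_im, Complex.ofReal_im, Complex.add_im, Complex.mul_im]
    rw [Complex.norm_real, Real.norm_eq_abs, abs_of_nonneg (Real.sqrt_nonneg 2), inv_pow,
      Real.sq_sqrt (by norm_num : (0:ℝ) ≤ 2)]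
    ring
  exact ⟨key, habs, by rw [habs, hng]⟩
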